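/- arXiv:2504.00893 — 2 statements merged into one kernel-verified Lean document; each statement's English description precedes it below -/
import Mathlib

section
/- Let Ω ⊆ ℝ³ be the open ball of radius R > 0 centered at a point c. Then for every x ∈ ℝ³, ∫_Ω ‖x − y‖⁻² dy ≤ 4π R, where the integral is with respect to Lebesgue measure on ℝ³. -/
open MeasureTheory Metric Set
open scoped ENNReal

local notation "E3" => EuclideanSpace ℝ (Fin 3)

lemma kb_dim : Module.finrank ℝ (EuclideanSpace ℝ (Fin 3)) = 3 := by
  simp [finrank_euclideanSpace]

lemma kb_meas (x : E3) : Measurable fun y : E3 => (‖x - y‖ ^ 2)⁻¹ := by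
  have h1 : Measurable fun y : E3 => x - y := measurable_const.sub measurable_id
  exact ((h1.norm).pow_const 2).inv

lemma kb_lintegral_finite (M : ℝ) (x : E3) :
    ∫⁻ y in Metric.ball x M, ENNReal.ofReal ((‖x - y‖ ^ 2)⁻¹) < ∞ := by
  set μ := (volume : Measure E3).restrict (Metric.ball x M) with hμ
  have h_nn : (0 : E3 → ℝ) ≤ᵐ[μ] fun y => (‖x - y‖ ^ 2)⁻¹ :=
    Filter.Eventually.of_forall fun y => by positivity
  rw [show (∫⁻ y in Metric.ball x M, ENNReal.ofReal ((‖x - y‖ ^ 2)⁻¹)) =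
      ∫⁻ y, ENNReal.ofReal ((‖x - y‖ ^ 2)⁻¹) ∂μ from rfl,
    lintegral_eq_lintegral_meas_le μ h_nn (kb_meas x).aemeasurable]
  set F := fun t : ℝ => μ {a : E3 | t ≤ (‖x - a‖ ^ 2)⁻¹} with hF
  calc
    ∫⁻ t in Ioi (0:ℝ), F t ≤ ∫⁻ t in Ioc (0:ℝ) 1 ∪ Ioi 1, F t :=
      lintegral_mono_set Ioi_subset_Ioc_union_Ioi
    _ ≤ (∫⁻ t in Ioc (0:ℝ) 1, F t) + ∫⁻ t in Ioi (1:ℝ), F t := lintegral_union_le _ _ _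
    _ < ∞ := ENNReal.add_lt_top.2 ⟨?_, ?_⟩
  · -- near 0 : bound by the measure of the ball
    have hb : ∀ t ∈ Ioc (0:ℝ) 1, F t ≤ volume (Metric.ball x M) := fun t _ => by
      calc F t ≤ μ univ := measure_mono (subset_univ _)
        _ ≤ volume (Metric.ball x M) := by
          rw [hμ, Measure.restrict_apply_univ]
    calc (∫⁻ t in Ioc (0:ℝ) 1, F t) ≤ ∫⁻ _ in Ioc (0:ℝ) 1, volume (Metric.ball x M) :=
          setLIntegral_mono' measurableSet_Ioc hb
      _ = volume (Metric.ball x M) * volume (Ioc (0:ℝ) 1) := setLIntegral_const _ _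
      _ < ∞ := ENNReal.mul_lt_top measure_ball_lt_top (by simp)
  · -- tail : bound by measure of shrinking balls
    have hb : ∀ t ∈ Ioi (1:ℝ), F t ≤
        ENNReal.ofReal (t ^ (-(3:ℝ)/2)) * volume (Metric.ball (0:E3) 1) := by
      intro t ht
      have ht0 : (0:ℝ) < t := lt_trans one_pos ht
      have hsub : {a : E3 | t ≤ (‖x - a‖ ^ 2)⁻¹} ⊆ Metric.closedBall x (Real.sqrt t)⁻¹ := by
        intro a ha
        simp only [mem_setOf_eq] at ha
        have hs0 : 0 < ‖x - a‖ := by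
          rcases eq_or_lt_of_le (norm_nonneg (x - a)) with h | h
          · exfalso; rw [← h] at ha; simp at ha; linarith
          · exact h
        have h2 : ‖x - a‖ ^ 2 ≤ t⁻¹ := by
          have := inv_anti₀ ht0 ha
          rwa [inv_inv] at this
        have h3 : ‖x - a‖ ≤ Real.sqrt t⁻¹ := by
          have := Real.sqrt_le_sqrt h2
          rwa [Real.sqrt_sq hs0.le] at this
        rw [Metric.mem_closedBall, dist_comm, dist_eq_norm]
        rwa [Real.sqrt_inv] at h3
      calc F t ≤ μ (Metric.closedBall x (Real.sqrt t)⁻¹) := measure_mono hsub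
        _ ≤ volume (Metric.closedBall x (Real.sqrt t)⁻¹) := by
          rw [hμ]; exact Measure.restrict_le_self _
        _ = ENNReal.ofReal ((Real.sqrt t)⁻¹ ^ Module.finrank ℝ E3) *
            volume (Metric.ball (0:E3) 1) :=
          Measure.addHaar_closedBall _ _ (by positivity)
        _ = ENNReal.ofReal (t ^ (-(3:ℝ)/2)) * volume (Metric.ball (0:E3) 1) := by
          congr 2
          rw [kb_dim]
          rw [show ((Real.sqrt t)⁻¹ ^ 3 : ℝ) = (Real.sqrt t ^ 3)⁻¹ by rw [inv_pow]]
          rw [Real.sqrt_eq_rpow, ← Real.rpow_natCast (t ^ ((1:ℝ)/2)) 3,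
            ← Real.rpow_mul ht0.le, ← Real.rpow_neg ht0.le]
          norm_num
    calc (∫⁻ t in Ioi (1:ℝ), F t)
        ≤ ∫⁻ t in Ioi (1:ℝ), ENNReal.ofReal (t ^ (-(3:ℝ)/2)) * volume (Metric.ball (0:E3) 1) :=
          setLIntegral_mono' measurableSet_Ioi hb
      _ = (∫⁻ t in Ioi (1:ℝ), ENNReal.ofReal (t ^ (-(3:ℝ)/2))) * volume (Metric.ball (0:E3) 1) :=
          lintegral_mul_const' _ _ measure_ball_lt_top.ne
      _ < ∞ := by
          refine ENNReal.mul_lt_top ?_ measure_ball_lt_top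
          refine IntegrableOn.setLIntegral_lt_top ?_
          exact integrableOn_Ioi_rpow_of_lt (by norm_num) one_pos

lemma kb_integrableOn (R : ℝ) (x a : E3) :
    IntegrableOn (fun y : E3 => (‖x - y‖ ^ 2)⁻¹) (Metric.ball a R) := by
  have hsub : Metric.ball a R ⊆ Metric.ball x (|R| + dist a x + 1) := by
    intro y hy
    rw [Metric.mem_ball] at hy ⊢
    calc dist y x ≤ dist y a + dist a x := dist_triangle _ _ _
      _ < R + dist a x + 1 := by linarith
      _ ≤ |R| + dist a x + 1 := by have := le_abs_self R; linarith
  refine IntegrableOn.mono_set ?_ hsub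
  refine ⟨(kb_meas x).aestronglyMeasurable, ?_⟩
  rw [hasFiniteIntegral_iff_norm]
  have : ∀ y : E3, ENNReal.ofReal ‖(‖x - y‖ ^ 2)⁻¹‖ = ENNReal.ofReal ((‖x - y‖ ^ 2)⁻¹) := by
    intro y
    rw [Real.norm_of_nonneg (by positivity)]
  simp only [this]
  exact kb_lintegral_finite _ x

lemma kb_unit_ball_vol :
    (volume (Metric.ball (0 : E3) 1)).toReal = 4 / 3 * Real.pi := by
  rw [EuclideanSpace.volume_ball]
  have hcard : Fintype.card (Fin 3) = 3 := by simp
  rw [hcard]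
  have hΓ : Real.Gamma ((3:ℝ) / 2 + 1) = 3 / 4 * Real.sqrt Real.pi := by
    rw [Real.Gamma_add_one (by norm_num)]
    rw [show (3:ℝ)/2 = 1/2 + 1 by norm_num, Real.Gamma_add_one (by norm_num),
      Real.Gamma_one_half_eq]
    ring
  have hval : (Real.sqrt Real.pi ^ 3 / Real.Gamma ((3:ℝ) / 2 + 1) : ℝ) = 4 / 3 * Real.pi := by
    rw [hΓ]
    have hs : Real.sqrt Real.pi ^ 3 = Real.pi * Real.sqrt Real.pi := by
      rw [pow_succ, pow_two, Real.mul_self_sqrt Real.pi_pos.le]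
    rw [hs]
    have hne : Real.sqrt Real.pi ≠ 0 := by positivity
    field_simp
  rw [show ((3:ℕ) : ℝ) / 2 + 1 = (3:ℝ)/2 + 1 by norm_num] at *
  rw [hval]
  simp [ENNReal.toReal_ofReal (by positivity : (0:ℝ) ≤ 4 / 3 * Real.pi)]

lemma kb_value (R : ℝ) (hR : 0 < R) :
    ∫ z in Metric.ball (0 : E3) R, (‖z‖ ^ 2)⁻¹ = 4 * Real.pi * R := by
  have h := MeasureTheory.integral_fun_norm_addHaar (volume : Measure E3)
      (Set.indicator (Set.Iio R) fun r : ℝ => (r ^ 2)⁻¹)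
  have hlhs : (∫ z : E3, Set.indicator (Set.Iio R) (fun r : ℝ => (r ^ 2)⁻¹) ‖z‖)
      = ∫ z in Metric.ball (0 : E3) R, (‖z‖ ^ 2)⁻¹ := by
    rw [← integral_indicator measurableSet_ball]
    congr 1
    funext z
    by_cases hz : ‖z‖ < R
    · rw [Set.indicator_of_mem (by exact hz : ‖z‖ ∈ Set.Iio R),
        Set.indicator_of_mem (by rwa [mem_ball_zero_iff])]
    · rw [Set.indicator_of_notMem (by exact hz : ‖z‖ ∉ Set.Iio R),
        Set.indicator_of_notMem (by rwa [mem_ball_zero_iff])]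
  rw [hlhs, kb_dim] at h
  have hio : (∫ y in Ioi (0:ℝ), y ^ (3 - 1) • Set.indicator (Set.Iio R) (fun r : ℝ => (r ^ 2)⁻¹) y)
      = R := by
    rw [setIntegral_congr_fun measurableSet_Ioi
      (show ∀ y ∈ Ioi (0:ℝ), y ^ (3-1) • Set.indicator (Set.Iio R) (fun r : ℝ => (r ^ 2)⁻¹) y
        = Set.indicator (Set.Ioo 0 R) (fun _ => (1:ℝ)) y from ?_)]
    · rw [setIntegral_indicator measurableSet_Ioo,
        Set.inter_eq_self_of_subset_right Set.Ioo_subset_Ioi_self, setIntegral_const,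
        Real.volume_real_Ioo_of_le hR.le, smul_eq_mul, mul_one, sub_zero]
    · intro y hy
      have hy0 : 0 < y := hy
      by_cases hyR : y < R
      · rw [Set.indicator_of_mem (by exact hyR : y ∈ Set.Iio R),
          Set.indicator_of_mem (Set.mem_Ioo.2 ⟨hy0, hyR⟩)]
        simp only [smul_eq_mul]
        show y ^ 2 * (y ^ 2)⁻¹ = 1
        exact mul_inv_cancel₀ (by positivity)
      · rw [Set.indicator_of_notMem (by exact hyR : y ∉ Set.Iio R),
          Set.indicator_of_notMem (fun hm => hyR hm.2)]
        simp
  rw [hio, measureReal_def, kb_unit_ball_vol] at h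
  rw [h]
  simp only [smul_eq_mul, nsmul_eq_mul]
  push_cast
  ring

lemma kb_translate (R : ℝ) (x : E3) :
    ∫ y in Metric.ball x R, (‖x - y‖ ^ 2)⁻¹ = ∫ z in Metric.ball (0 : E3) R, (‖z‖ ^ 2)⁻¹ := by
  rw [← integral_indicator measurableSet_ball, ← integral_indicator measurableSet_ball]
  have hpt : ∀ y : E3, Set.indicator (Metric.ball x R) (fun y : E3 => (‖x - y‖ ^ 2)⁻¹) y
      = Set.indicator (Metric.ball (0:E3) R) (fun z : E3 => (‖z‖ ^ 2)⁻¹) (x - y) := by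
    intro y
    by_cases hy : y ∈ Metric.ball x R
    · rw [Set.indicator_of_mem hy, Set.indicator_of_mem]
      rw [mem_ball_zero_iff, ← dist_eq_norm, dist_comm, ← Metric.mem_ball]
      exact hy
    · rw [Set.indicator_of_notMem hy, Set.indicator_of_notMem]
      rw [mem_ball_zero_iff, ← dist_eq_norm, dist_comm, ← Metric.mem_ball]
      exact hy
  simp only [hpt]
  exact integral_sub_left_eq_self _ volume x

theorem kernel_estimate_ball (R : ℝ) (hR : 0 < R)
    (c x : EuclideanSpace ℝ (Fin 3)) :
    ∫ y in Metric.ball c R, (‖x - y‖ ^ 2)⁻¹ ≤ 4 * Real.pi * R := by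
  set f : E3 → ℝ := fun y => (‖x - y‖ ^ 2)⁻¹ with hf
  set C := Metric.ball c R
  set X := Metric.ball x R
  have hC : IntegrableOn f C := kb_integrableOn R x c
  have hX : IntegrableOn f X := kb_integrableOn R x x
  -- volumes of the two difference sets coincide
  have hvol : volume (C \ X) = volume (X \ C) := by
    have h1 : volume (C ∩ X) + volume (C \ X) = volume C :=
      measure_inter_add_diff C measurableSet_ball
    have h2 : volume (X ∩ C) + volume (X \ C) = volume X :=
      measure_inter_add_diff X measurableSet_ball
    have hCX : volume C = volume X := by
      rw [show C = Metric.ball c R from rfl, show X = Metric.ball x R from rfl,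
        Measure.addHaar_ball _ _ hR.le, Measure.addHaar_ball _ _ hR.le]
    rw [Set.inter_comm X C] at h2
    have hfin : volume (C ∩ X) ≠ ∞ :=
      (measure_mono Set.inter_subset_left |>.trans_lt measure_ball_lt_top).ne
    rw [hCX, ← h2] at h1
    exact (ENNReal.add_right_inj hfin).mp h1
  -- integral over C \ X is at most integral over X \ C
  have hdiff : (∫ y in C \ X, f y) ≤ ∫ y in X \ C, f y := by
    have hfinCX : volume (C \ X) ≠ ∞ :=
      (measure_mono Set.diff_subset |>.trans_lt measure_ball_lt_top).ne
    have step1 : (∫ y in C \ X, f y) ≤ (volume (C \ X)).toReal * (R ^ 2)⁻¹ := by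
      have hb : ∀ y ∈ C \ X, f y ≤ (R ^ 2)⁻¹ := by
        intro y hy
        have hyX : R ≤ dist y x := by
          have := hy.2
          rw [Metric.mem_ball, not_lt] at this
          exact this
        have hnorm : R ≤ ‖x - y‖ := by rw [← dist_eq_norm, dist_comm]; exact hyX
        rw [hf]
        have h2 : R ^ 2 ≤ ‖x - y‖ ^ 2 := by nlinarith
        exact inv_anti₀ (by positivity) h2
      calc (∫ y in C \ X, f y) ≤ ∫ _ in C \ X, (R ^ 2)⁻¹ := by
            refine setIntegral_mono_on (hC.mono_set Set.diff_subset) ?_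
              (measurableSet_ball.diff measurableSet_ball) hb
            exact integrableOn_const (lt_of_le_of_lt
              (measure_mono Set.diff_subset) measure_ball_lt_top).ne
        _ = (volume (C \ X)).toReal * (R ^ 2)⁻¹ := by
            rw [setIntegral_const, smul_eq_mul, measureReal_def]
    have step2 : (volume (X \ C)).toReal * (R ^ 2)⁻¹ ≤ ∫ y in X \ C, f y := by
      have hb : ∀ᵐ y ∂(volume.restrict (X \ C)), (R ^ 2)⁻¹ ≤ f y := by
        have hae : ∀ᵐ y ∂(volume.restrict (X \ C)), y ≠ x := by
          refine ae_restrict_of_ae ?_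
          have : volume ({x} : Set E3) = 0 := measure_singleton x
          filter_upwards [measure_eq_zero_iff_ae_notMem.mp this] with y hy
          simpa using hy
        have hXmem : ∀ᵐ y ∂(volume.restrict (X \ C)), y ∈ X \ C :=
          ae_restrict_mem (measurableSet_ball.diff measurableSet_ball)
        filter_upwards [hae, hXmem] with y hy hyX
        have hdist : dist y x < R := hyX.1
        have hnorm : ‖x - y‖ < R := by rw [← dist_eq_norm, dist_comm]; exact hdist
        have hpos : 0 < ‖x - y‖ := by
          rw [norm_pos_iff, sub_ne_zero]
          exact fun h => hy (by rw [h])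
        rw [hf]
        have h2 : ‖x - y‖ ^ 2 ≤ R ^ 2 := by nlinarith
        exact inv_anti₀ (by positivity) h2
      calc (volume (X \ C)).toReal * (R ^ 2)⁻¹ = ∫ _ in X \ C, (R ^ 2)⁻¹ := by
            rw [setIntegral_const, smul_eq_mul, measureReal_def]
        _ ≤ ∫ y in X \ C, f y := by
            refine integral_mono_ae ?_ (hX.mono_set Set.diff_subset) hb
            exact integrableOn_const (lt_of_le_of_lt
              (measure_mono Set.diff_subset) measure_ball_lt_top).ne
    calc (∫ y in C \ X, f y) ≤ (volume (C \ X)).toReal * (R ^ 2)⁻¹ := step1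
      _ = (volume (X \ C)).toReal * (R ^ 2)⁻¹ := by rw [hvol]
      _ ≤ ∫ y in X \ C, f y := step2
  have hsplitC : (∫ y in C ∩ X, f y) + ∫ y in C \ X, f y = ∫ y in C, f y :=
    integral_inter_add_diff measurableSet_ball hC
  have hsplitX : (∫ y in X ∩ C, f y) + ∫ y in X \ C, f y = ∫ y in X, f y :=
    integral_inter_add_diff measurableSet_ball hX
  have hmain : (∫ y in C, f y) ≤ ∫ y in X, f y := by
    rw [← hsplitC, ← hsplitX, Set.inter_comm X C]
    exact add_le_add le_rfl hdiff
  calc (∫ y in C, f y) ≤ ∫ y in X, f y := hmain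
    _ = ∫ z in Metric.ball (0 : E3) R, (‖z‖ ^ 2)⁻¹ := kb_translate R x
    _ = 4 * Real.pi * R := kb_value R hR
end

section
/- Let Ω ⊆ ℝ³ be a bounded measurable set with diameter at most d, and let B : ℝ³ → ℝ³ be an integrable vector field vanishing outside Ω whose squared norm is integrable on Ω. Let A be the Biot–Savart vector potential of B. Then ∫_Ω ‖A(x)‖² dx ≤ d² · ∫_Ω ‖B(x)‖² dx. -/
open MeasureTheory
open scoped ENNReal NNReal

noncomputable section

open Set Metric Real in
private lemma lintegral_fun_norm_addHaar'' {E : Type*} [NormedAddCommGroup E] [NormedSpace ℝ E]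
    [MeasurableSpace E] [BorelSpace E] [Nontrivial E] [FiniteDimensional ℝ E]
    (μ : Measure E) [μ.IsAddHaarMeasure] (g : ℝ → ℝ≥0∞) (hg : Measurable g) :
    ∫⁻ x, g ‖x‖ ∂μ = (Module.finrank ℝ E : ℝ≥0∞) * μ (ball 0 1) *
      ∫⁻ y in Ioi (0 : ℝ), ENNReal.ofReal (y ^ (Module.finrank ℝ E - 1)) * g y := by
  have hgm : Measurable fun p : sphere (0:E) 1 × Ioi (0:ℝ) => g p.2 :=
    hg.comp (measurable_subtype_coe.comp measurable_snd)
  calc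
    ∫⁻ x, g ‖x‖ ∂μ = ∫⁻ x : ({(0)}ᶜ : Set E), g ‖x.1‖ ∂(μ.comap (↑)) := by
      rw [lintegral_subtype_comap (measurableSet_singleton (0:E)).compl (fun x => g ‖x‖),
        restrict_compl_singleton]
    _ = ∫⁻ p : sphere (0:E) 1 × Ioi (0:ℝ), g p.2
          ∂(μ.toSphere.prod (.volumeIoiPow (Module.finrank ℝ E - 1))) := by
      rw [← μ.measurePreserving_homeomorphUnitSphereProd.lintegral_comp hgm]
      simp
    _ = μ.toSphere univ * ∫⁻ r : Ioi (0:ℝ),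
          g r ∂(Measure.volumeIoiPow (Module.finrank ℝ E - 1)) := by
      rw [lintegral_prod _ hgm.aemeasurable]
      simp [lintegral_const, mul_comm]
    _ = _ := by
      rw [Measure.toSphere_apply_univ]
      congr 1
      rw [Measure.volumeIoiPow]
      erw [lintegral_withDensity_eq_lintegral_mul _
          ((measurable_subtype_coe.pow_const _).ennreal_ofReal)
          (hg.comp measurable_subtype_coe)]
      simp only [Pi.mul_apply]
      exact lintegral_subtype_comap measurableSet_Ioi
        (fun a => ENNReal.ofReal (a ^ (Module.finrank ℝ E - 1)) * g a)

open Set Metric Real in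
private lemma volume_ball_three' :
    volume (ball (0 : EuclideanSpace ℝ (Fin 3)) 1) = ENNReal.ofReal (4/3 * π) := by
  rw [EuclideanSpace.volume_ball]
  have hΓ : Real.Gamma ((Fintype.card (Fin 3) : ℝ)/2 + 1) = 3/4 * √π := by
    have h1 : ((Fintype.card (Fin 3) : ℝ))/2 + 1 = 3/2 + 1 := by norm_num
    have h2 : (3:ℝ)/2 = 1/2 + 1 := by norm_num
    rw [h1, Real.Gamma_add_one (by norm_num), h2, Real.Gamma_add_one (by norm_num),
      Real.Gamma_one_half_eq]
    ring
  have hs : √π ^ Fintype.card (Fin 3) = π * √π := by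
    rw [Fintype.card_fin, pow_succ, sq_sqrt pi_nonneg]
  rw [hΓ, hs]
  have hπ : √π ≠ 0 := ne_of_gt (sqrt_pos.mpr pi_pos)
  rw [ENNReal.ofReal_one, one_pow, one_mul]
  congr 1
  field_simp

open Set Metric Real in
private lemma key_ball_integral (x : EuclideanSpace ℝ (Fin 3)) (d : ℝ) :
    ∫⁻ y in closedBall x d, (ENNReal.ofReal (‖x - y‖ ^ 2))⁻¹ =
      ENNReal.ofReal (4 * π * d) := by
  have hf : Measurable fun z : EuclideanSpace ℝ (Fin 3) => (ENNReal.ofReal (‖z‖ ^ 2))⁻¹ :=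
    ((measurable_norm.pow_const 2).ennreal_ofReal).inv
  have h1 : ∫⁻ y in closedBall x d, (ENNReal.ofReal (‖x - y‖ ^ 2))⁻¹
      = ∫⁻ z in closedBall (0 : EuclideanSpace ℝ (Fin 3)) d, (ENNReal.ofReal (‖z‖ ^ 2))⁻¹ := by
    have hmp : MeasurePreserving (fun z : EuclideanSpace ℝ (Fin 3) => x - z) volume volume :=
      Measure.measurePreserving_sub_left volume x
    have hpre : (fun z : EuclideanSpace ℝ (Fin 3) => x - z) ⁻¹' closedBall 0 d
        = closedBall x d := by
      ext z
      simp [mem_closedBall, dist_eq_norm, norm_sub_rev]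
    have := hmp.setLIntegral_comp_preimage
      (s := closedBall (0 : EuclideanSpace ℝ (Fin 3)) d) measurableSet_closedBall hf
    rw [hpre] at this
    exact this
  set g : ℝ → ℝ≥0∞ := (Iic d).indicator (fun r => (ENNReal.ofReal (r ^ 2))⁻¹) with hgdef
  have hg : Measurable g :=
    Measurable.indicator ((measurable_id.pow_const 2).ennreal_ofReal).inv measurableSet_Iic
  have h2 : ∫⁻ z in closedBall (0 : EuclideanSpace ℝ (Fin 3)) d, (ENNReal.ofReal (‖z‖ ^ 2))⁻¹
      = ∫⁻ z : EuclideanSpace ℝ (Fin 3), g ‖z‖ := by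
    rw [← lintegral_indicator measurableSet_closedBall]
    refine lintegral_congr fun z => ?_
    by_cases h : ‖z‖ ≤ d <;>
      simp [hgdef, Set.indicator, mem_closedBall_zero_iff, h]
  have hrank : Module.finrank ℝ (EuclideanSpace ℝ (Fin 3)) = 3 := by
    simp [finrank_euclideanSpace]
  have h3 : ∫⁻ y in Ioi (0:ℝ), ENNReal.ofReal (y ^ 2) * g y = ENNReal.ofReal d := by
    have : ∀ y ∈ Ioi (0:ℝ), ENNReal.ofReal (y ^ 2) * g y = (Iic d).indicator 1 y := by
      intro y hy
      rw [mem_Ioi] at hy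
      by_cases h : y ≤ d
      · simp only [hgdef, Set.indicator_of_mem (mem_Iic.mpr h)]
        rw [ENNReal.mul_inv_cancel (by simp [ENNReal.ofReal_pos]; positivity)
          ENNReal.ofReal_ne_top]
        simp [Set.indicator_of_mem (mem_Iic.mpr h)]
      · simp [hgdef, Set.indicator_of_notMem (fun hc => h (mem_Iic.mp hc))]
    rw [setLIntegral_congr_fun measurableSet_Ioi this,
      lintegral_indicator measurableSet_Iic _]
    simp only [Pi.one_apply]
    rw [setLIntegral_one, Measure.restrict_apply measurableSet_Iic]
    rw [show Iic d ∩ Ioi (0:ℝ) = Ioc 0 d by rw [inter_comm, ← Ioc_def]; rfl]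
    simp [Real.volume_Ioc]
  rw [h1, h2, lintegral_fun_norm_addHaar'' volume g hg, hrank]
  rw [volume_ball_three']
  norm_num [h3]
  rw [show (3 : ℝ≥0∞) = ENNReal.ofReal 3 by norm_num, ← ENNReal.ofReal_mul (by norm_num),
    ← ENNReal.ofReal_mul (by positivity)]
  ring_nf
  rw [← ENNReal.ofReal_mul (by positivity)]
  ring_nf

/-- The cross product of two vectors in Euclidean 3-space. -/
def cross3 (u v : EuclideanSpace ℝ (Fin 3)) : EuclideanSpace ℝ (Fin 3) :=
  (WithLp.equiv 2 (Fin 3 → ℝ)).symm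
    ![u 1 * v 2 - u 2 * v 1, u 2 * v 0 - u 0 * v 2, u 0 * v 1 - u 1 * v 0]

open Real in
private lemma norm_cross3_le (u v : EuclideanSpace ℝ (Fin 3)) :
    ‖cross3 u v‖ ≤ ‖u‖ * ‖v‖ := by
  have hn : ∀ w : EuclideanSpace ℝ (Fin 3), ‖w‖ = √(w 0 ^ 2 + w 1 ^ 2 + w 2 ^ 2) := by
    intro w
    rw [EuclideanSpace.norm_eq]
    congr 1
    simp [Fin.sum_univ_three, sq_abs]
  have hc0 : cross3 u v 0 = u 1 * v 2 - u 2 * v 1 := rfl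
  have hc1 : cross3 u v 1 = u 2 * v 0 - u 0 * v 2 := rfl
  have hc2 : cross3 u v 2 = u 0 * v 1 - u 1 * v 0 := rfl
  rw [hn, hn, hn, hc0, hc1, hc2, ← Real.sqrt_mul (by positivity)]
  apply Real.sqrt_le_sqrt
  nlinarith [sq_nonneg (u 0 * v 0 + u 1 * v 1 + u 2 * v 2)]

/-- The Biot–Savart vector potential of a field `B` supported in `Ω`:
`A(x) = (1/(4π)) ∫_Ω B(y) × (x − y)/‖x − y‖³ dy`. -/
def biotSavart (Ω : Set (EuclideanSpace ℝ (Fin 3)))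
    (B : EuclideanSpace ℝ (Fin 3) → EuclideanSpace ℝ (Fin 3))
    (x : EuclideanSpace ℝ (Fin 3)) : EuclideanSpace ℝ (Fin 3) :=
  (1 / (4 * Real.pi)) • ∫ y in Ω, (‖x - y‖ ^ 3)⁻¹ • cross3 (B y) (x - y)

theorem biotSavart_L2_bound (Ω : Set (EuclideanSpace ℝ (Fin 3)))
    (hΩ : MeasurableSet Ω) (hΩb : Bornology.IsBounded Ω)
    (d : ℝ) (hd : Metric.diam Ω ≤ d)
    (B : EuclideanSpace ℝ (Fin 3) → EuclideanSpace ℝ (Fin 3))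
    (hB : Integrable B) (hB0 : ∀ x ∉ Ω, B x = 0)
    (hB2 : IntegrableOn (fun x => ‖B x‖ ^ 2) Ω) :
    ∫ x in Ω, ‖biotSavart Ω B x‖ ^ 2 ≤ d ^ 2 * ∫ x in Ω, ‖B x‖ ^ 2 := by
  classical
  have hd0 : 0 ≤ d := le_trans Metric.diam_nonneg hd
  have hRHS0 : 0 ≤ d ^ 2 * ∫ x in Ω, ‖B x‖ ^ 2 :=
    mul_nonneg (sq_nonneg d) (integral_nonneg fun x => sq_nonneg _)
  by_cases hAint : IntegrableOn (fun x => ‖biotSavart Ω B x‖ ^ 2) Ω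
  case neg => rw [integral_undef hAint]; exact hRHS0
  -- measurable representative of B
  obtain ⟨B', hB'meas, hBB'⟩ : ∃ B' : EuclideanSpace ℝ (Fin 3) → EuclideanSpace ℝ (Fin 3),
      StronglyMeasurable B' ∧ B =ᵐ[volume] B' :=
    ⟨hB.1.mk B, hB.1.stronglyMeasurable_mk, hB.1.ae_eq_mk⟩
  set K : EuclideanSpace ℝ (Fin 3) → EuclideanSpace ℝ (Fin 3) → ℝ≥0∞ :=
    fun x y => (ENNReal.ofReal (‖x - y‖ ^ 2))⁻¹ with hKdef
  have hKm : ∀ x, Measurable (fun y => K x y) := fun x =>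
    (((measurable_const.sub measurable_id).norm.pow_const 2).ennreal_ofReal).inv
  set M : ℝ≥0∞ := ENNReal.ofReal (4 * Real.pi * d) with hMdef
  set c : ℝ≥0∞ := ENNReal.ofReal (1 / (4 * Real.pi)) with hcdef
  -- uniform bounds on the kernel integrals
  have hKx : ∀ x ∈ Ω, ∫⁻ y in Ω, K x y ≤ M := by
    intro x hx
    calc ∫⁻ y in Ω, K x y ≤ ∫⁻ y in Metric.closedBall x d, K x y :=
          lintegral_mono_set fun y hy => Metric.mem_closedBall.mpr
            (le_trans (Metric.dist_le_diam_of_mem hΩb hy hx) hd)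
      _ = M := key_ball_integral x d
  have hKy : ∀ y ∈ Ω, ∫⁻ x in Ω, K x y ≤ M := by
    intro y hy
    have hsymm : ∀ x : EuclideanSpace ℝ (Fin 3), K x y = (ENNReal.ofReal (‖y - x‖ ^ 2))⁻¹ := by
      intro x; rw [hKdef]; simp [norm_sub_rev]
    calc ∫⁻ x in Ω, K x y ≤ ∫⁻ x in Metric.closedBall y d, K x y :=
          lintegral_mono_set fun x hx => Metric.mem_closedBall.mpr
            (le_trans (Metric.dist_le_diam_of_mem hΩb hx hy) hd)
      _ = ∫⁻ x in Metric.closedBall y d, (ENNReal.ofReal (‖y - x‖ ^ 2))⁻¹ :=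
          lintegral_congr fun x => hsymm x
      _ = M := key_ball_integral y d
  -- pointwise bound on the integrand of A
  have hpt : ∀ x y : EuclideanSpace ℝ (Fin 3),
      (‖(‖x - y‖ ^ 3)⁻¹ • cross3 (B y) (x - y)‖₊ : ℝ≥0∞)
        ≤ ENNReal.ofReal ‖B y‖ * K x y := by
    intro x y
    rw [← enorm_eq_nnnorm, ← ofReal_norm]
    rcases eq_or_ne x y with h | h
    · simp [h, sub_self]
    · have hr : (0:ℝ) < ‖x - y‖ := norm_pos_iff.mpr (sub_ne_zero.mpr h)
      show ENNReal.ofReal ‖(‖x - y‖ ^ 3)⁻¹ • cross3 (B y) (x - y)‖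
        ≤ ENNReal.ofReal ‖B y‖ * (ENNReal.ofReal (‖x - y‖ ^ 2))⁻¹
      rw [← ENNReal.ofReal_inv_of_pos (pow_pos hr 2),
        ← ENNReal.ofReal_mul (norm_nonneg _)]
      apply ENNReal.ofReal_le_ofReal
      rw [norm_smul, Real.norm_eq_abs, abs_of_nonneg (by positivity)]
      calc (‖x - y‖ ^ 3)⁻¹ * ‖cross3 (B y) (x - y)‖
            ≤ (‖x - y‖ ^ 3)⁻¹ * (‖B y‖ * ‖x - y‖) :=
            mul_le_mul_of_nonneg_left (norm_cross3_le _ _) (by positivity)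
        _ = ‖B y‖ * (‖x - y‖ ^ 2)⁻¹ := by field_simp
  -- pointwise bound on A
  set Φ : EuclideanSpace ℝ (Fin 3) → ℝ≥0∞ :=
    fun x => ∫⁻ y in Ω, ENNReal.ofReal ‖B' y‖ * K x y with hΦdef
  have hA : ∀ x, ENNReal.ofReal (‖biotSavart Ω B x‖ ^ 2) ≤ (c * Φ x) ^ 2 := by
    intro x
    have h1 : ENNReal.ofReal ‖biotSavart Ω B x‖ ≤ c * Φ x := by
      rw [biotSavart, norm_smul, Real.norm_eq_abs, abs_of_nonneg (by positivity),
        ENNReal.ofReal_mul (by positivity), hcdef]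
      gcongr
      calc ENNReal.ofReal ‖∫ y in Ω, (‖x - y‖ ^ 3)⁻¹ • cross3 (B y) (x - y)‖
          = (‖∫ y in Ω, (‖x - y‖ ^ 3)⁻¹ • cross3 (B y) (x - y)‖₊ : ℝ≥0∞) :=
            ofReal_norm _
        _ ≤ ∫⁻ y in Ω, (‖(‖x - y‖ ^ 3)⁻¹ • cross3 (B y) (x - y)‖₊ : ℝ≥0∞) :=
            enorm_integral_le_lintegral_enorm _
        _ ≤ ∫⁻ y in Ω, ENNReal.ofReal ‖B y‖ * K x y := lintegral_mono fun y => hpt x y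
        _ = Φ x := by
            refine lintegral_congr_ae ?_
            filter_upwards [ae_restrict_of_ae hBB'] with y hy
            rw [hy]
    calc ENNReal.ofReal (‖biotSavart Ω B x‖ ^ 2)
        = ENNReal.ofReal ‖biotSavart Ω B x‖ ^ 2 := by
          rw [← ENNReal.ofReal_pow (norm_nonneg _)]
      _ ≤ (c * Φ x) ^ 2 := by gcongr
  -- Cauchy–Schwarz for each x
  set G : EuclideanSpace ℝ (Fin 3) → ℝ≥0∞ :=
    fun x => ∫⁻ y in Ω, ENNReal.ofReal (‖B' y‖ ^ 2) * K x y with hGdef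
  have hHolder : ∀ x, Φ x ^ 2 ≤ (∫⁻ y in Ω, K x y) * G x := by
    intro x
    have hf : AEMeasurable (fun y => (K x y) ^ (1/2 : ℝ)) (volume.restrict Ω) :=
      ((hKm x).pow_const _).aemeasurable
    have hg : AEMeasurable (fun y => ENNReal.ofReal ‖B' y‖ * (K x y) ^ (1/2 : ℝ))
        (volume.restrict Ω) :=
      ((hB'meas.measurable.norm.ennreal_ofReal).mul ((hKm x).pow_const _)).aemeasurable
    have hpq : Real.HolderConjugate 2 2 := Real.HolderConjugate.two_two
    have h := ENNReal.lintegral_mul_le_Lp_mul_Lq (volume.restrict Ω) hpq hf hg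
    have hmul : ∀ y, (K x y) ^ (1/2 : ℝ) * (ENNReal.ofReal ‖B' y‖ * (K x y) ^ (1/2 : ℝ))
        = ENNReal.ofReal ‖B' y‖ * K x y := by
      intro y
      rw [mul_left_comm, ← ENNReal.rpow_add_of_nonneg _ _ (by norm_num) (by norm_num)]
      norm_num
    have hfp : ∀ y, ((K x y) ^ (1/2 : ℝ)) ^ (2:ℝ) = K x y := by
      intro y
      rw [← ENNReal.rpow_mul]
      norm_num
    have hgp : ∀ y, (ENNReal.ofReal ‖B' y‖ * (K x y) ^ (1/2 : ℝ)) ^ (2:ℝ)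
        = ENNReal.ofReal (‖B' y‖ ^ 2) * K x y := by
      intro y
      rw [ENNReal.mul_rpow_of_nonneg _ _ (by norm_num)]
      congr 1
      · rw [ENNReal.ofReal_rpow_of_nonneg (norm_nonneg _) (by norm_num : (0:ℝ) ≤ 2)]
        norm_num
      · rw [← ENNReal.rpow_mul]
        norm_num
    simp only [hmul, hfp, hgp] at h
    calc Φ x ^ 2 ≤ ((∫⁻ y in Ω, K x y) ^ (1/(2:ℝ)) * (G x) ^ (1/(2:ℝ))) ^ 2 := by
          gcongr
          simpa only [Pi.mul_apply, hmul, hΦdef, hGdef] using h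
      _ = (∫⁻ y in Ω, K x y) * G x := by
          rw [mul_pow, ← ENNReal.rpow_natCast (_ ^ (1/(2:ℝ))) 2,
            ← ENNReal.rpow_natCast ((G x) ^ (1/(2:ℝ))) 2, ← ENNReal.rpow_mul,
            ← ENNReal.rpow_mul]
          norm_num
  -- the main chain of inequalities in ℝ≥0∞
  have hBmeasprod : Measurable (Function.uncurry fun x y =>
      ENNReal.ofReal (‖B' y‖ ^ 2) * K x y) := by
    apply Measurable.mul
    · exact ((hB'meas.measurable.comp measurable_snd).norm.pow_const 2).ennreal_ofReal
    · exact (((measurable_fst.sub measurable_snd).norm.pow_const 2).ennreal_ofReal).inv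
  have hL : ∫⁻ y in Ω, ENNReal.ofReal (‖B' y‖ ^ 2)
      = ENNReal.ofReal (∫ y in Ω, ‖B y‖ ^ 2) := by
    rw [ofReal_integral_eq_lintegral_ofReal hB2 (ae_of_all _ fun y => sq_nonneg _)]
    refine lintegral_congr_ae ?_
    filter_upwards [ae_restrict_of_ae hBB'] with y hy
    rw [hy]
  have hmain : ∫⁻ x in Ω, ENNReal.ofReal (‖biotSavart Ω B x‖ ^ 2)
      ≤ ENNReal.ofReal (d ^ 2 * ∫ x in Ω, ‖B x‖ ^ 2) := by
    calc ∫⁻ x in Ω, ENNReal.ofReal (‖biotSavart Ω B x‖ ^ 2)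
        ≤ ∫⁻ x in Ω, (c * Φ x) ^ 2 := lintegral_mono fun x => hA x
      _ = c ^ 2 * ∫⁻ x in Ω, Φ x ^ 2 := by
          simp_rw [mul_pow]
          exact lintegral_const_mul' _ _ (ENNReal.pow_ne_top ENNReal.ofReal_ne_top)
      _ ≤ c ^ 2 * ∫⁻ x in Ω, M * G x := by
          refine mul_le_mul_right ?_ _
          refine lintegral_mono_ae ((ae_restrict_iff' hΩ).mpr (ae_of_all _ fun x hx => ?_))
          exact le_trans (hHolder x) (mul_le_mul_left (hKx x hx) _)
      _ = c ^ 2 * (M * ∫⁻ x in Ω, G x) := by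
          rw [lintegral_const_mul' _ _ ENNReal.ofReal_ne_top]
      _ = c ^ 2 * (M * ∫⁻ y in Ω, ∫⁻ x in Ω, ENNReal.ofReal (‖B' y‖ ^ 2) * K x y) := by
          rw [hGdef]
          congr 2
          exact lintegral_lintegral_swap hBmeasprod.aemeasurable
      _ = c ^ 2 * (M * ∫⁻ y in Ω, ENNReal.ofReal (‖B' y‖ ^ 2) * ∫⁻ x in Ω, K x y) := by
          congr 2
          exact lintegral_congr fun y => lintegral_const_mul' _ _ ENNReal.ofReal_ne_top
      _ ≤ c ^ 2 * (M * ∫⁻ y in Ω, ENNReal.ofReal (‖B' y‖ ^ 2) * M) := by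
          refine mul_le_mul_right (mul_le_mul_right ?_ _) _
          refine lintegral_mono_ae ((ae_restrict_iff' hΩ).mpr (ae_of_all _ fun y hy => ?_))
          exact mul_le_mul_right (hKy y hy) _
      _ = c ^ 2 * (M * (M * ∫⁻ y in Ω, ENNReal.ofReal (‖B' y‖ ^ 2))) := by
          simp_rw [mul_comm _ M]
          rw [lintegral_const_mul' _ _ ENNReal.ofReal_ne_top]
      _ = (c * M) ^ 2 * ∫⁻ y in Ω, ENNReal.ofReal (‖B' y‖ ^ 2) := by ring
      _ = ENNReal.ofReal (d ^ 2 * ∫ x in Ω, ‖B x‖ ^ 2) := by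
          rw [hL, hcdef, hMdef, ← ENNReal.ofReal_mul (by positivity)]
          rw [show 1 / (4 * Real.pi) * (4 * Real.pi * d) = d by
            field_simp]
          rw [← ENNReal.ofReal_pow hd0, ← ENNReal.ofReal_mul (by positivity)]
  rw [integral_eq_lintegral_of_nonneg_ae (ae_of_all _ fun x => sq_nonneg _)
    hAint.aestronglyMeasurable]
  exact ENNReal.toReal_le_of_le_ofReal hRHS0 hmain

end
end
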